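/- Let R : ℝ → Matrix (Fin n) (Fin n) ℝ be twice continuously differentiable, and let B solve B'' = R B with B(0) = 0, B'(0) = Id. Then B admits the expansion B(λ) = λ·Id + (λ³/3!)·R(0) + (λ⁴/4!)·2R'(0) + (λ⁵/5!)·(3R''(0) + R(0)²) + o(λ⁵) as λ → 0. -/

import Mathlib

open Matrix Asymptotics Filter

attribute [local instance] Matrix.normedAddCommGroup Matrix.normedSpace

lemma wxl_norm_mul_le {n : ℕ} (A C : Matrix (Fin n) (Fin n) ℝ) :
    ‖A * C‖ ≤ (n : ℝ) * ‖A‖ * ‖C‖ := by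
  rw [Matrix.norm_le_iff (by positivity)]
  intro i j
  calc ‖(A * C) i j‖ = ‖∑ k, A i k * C k j‖ := by rw [Matrix.mul_apply]
    _ ≤ ∑ k, ‖A i k * C k j‖ := norm_sum_le _ _
    _ ≤ ∑ _k : Fin n, ‖A‖ * ‖C‖ := by
        refine Finset.sum_le_sum fun k _ => ?_
        rw [norm_mul]
        exact mul_le_mul (Matrix.norm_entry_le_entrywise_sup_norm A)
          (Matrix.norm_entry_le_entrywise_sup_norm C) (norm_nonneg _) (norm_nonneg _)
    _ = (n : ℝ) * ‖A‖ * ‖C‖ := by simp [mul_assoc]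

lemma wxl_int_step {n : ℕ} {k : ℕ} {f : ℝ → Matrix (Fin n) (Fin n) ℝ}
    (hf : Differentiable ℝ f) (h0 : f 0 = 0)
    (h : deriv f =o[nhds 0] fun l : ℝ => l ^ k) :
    f =o[nhds 0] fun l : ℝ => l ^ (k + 1) := by
  rw [isLittleO_iff] at h ⊢
  intro ε hε
  have h' := h hε
  rw [Metric.eventually_nhds_iff] at h' ⊢
  obtain ⟨δ, hδ, H⟩ := h'
  refine ⟨δ, hδ, fun {l} hl => ?_⟩
  have key : ‖f l - f 0‖ ≤ ε * ‖l‖ ^ k * ‖l - 0‖ := by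
    refine Convex.norm_image_sub_le_of_norm_deriv_le (s := Metric.closedBall (0:ℝ) ‖l‖)
      (fun x _ => hf x) (fun x hx => ?_) (convex_closedBall _ _)
      (Metric.mem_closedBall_self (norm_nonneg _)) ?_
    · have hx' : ‖x‖ ≤ ‖l‖ := by simpa [Metric.mem_closedBall, Real.dist_eq, Real.norm_eq_abs] using hx
      have := H (y := x) (lt_of_le_of_lt (by simpa [Real.dist_eq, Real.norm_eq_abs] using hx')
        (by simpa [Real.dist_eq] using hl))
      calc ‖deriv f x‖ ≤ ε * ‖x ^ k‖ := this
        _ ≤ ε * ‖l‖ ^ k := by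
            rw [norm_pow]
            exact mul_le_mul_of_nonneg_left (pow_le_pow_left₀ (norm_nonneg _) hx' k) hε.le
    · simp [Metric.mem_closedBall, Real.dist_eq, Real.norm_eq_abs]
  rw [h0, sub_zero] at key
  calc ‖f l‖ ≤ ε * ‖l‖ ^ k * ‖l - 0‖ := key
    _ = ε * ‖l ^ (k+1)‖ := by rw [norm_pow, sub_zero]; ring

lemma wxl_mul_littleO {n : ℕ} {f g : ℝ → Matrix (Fin n) (Fin n) ℝ} {v : ℝ → ℝ}
    (hf : ContinuousAt f 0) (hg : g =o[nhds 0] v) :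
    (fun l => f l * g l) =o[nhds 0] v := by
  have hb : ∀ᶠ l in nhds 0, ‖f l‖ < ‖f 0‖ + 1 :=
    (hf.norm : Tendsto (fun l => ‖f l‖) (nhds 0) (nhds ‖f 0‖)).eventually_lt_const
      (lt_add_one _)
  rw [isLittleO_iff] at hg ⊢
  intro ε hε
  have hD : (0:ℝ) < (n : ℝ) * (‖f 0‖ + 1) + 1 := by positivity
  filter_upwards [hb, hg (div_pos hε hD)] with l h1 h2
  have h3 := wxl_norm_mul_le (f l) (g l)
  have h4 : (n:ℝ) * ‖f l‖ * ‖g l‖ ≤ ((n:ℝ) * (‖f 0‖ + 1) + 1) * (ε / ((n:ℝ) * (‖f 0‖ + 1) + 1) * ‖v l‖) := by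
    have hn : (0:ℝ) ≤ n := Nat.cast_nonneg n
    refine mul_le_mul ?_ h2 (norm_nonneg _) hD.le
    nlinarith [norm_nonneg (f l)]
  calc ‖f l * g l‖ ≤ (n:ℝ) * ‖f l‖ * ‖g l‖ := h3
    _ ≤ _ := h4
    _ = ε * ‖v l‖ := by field_simp

/-- Fifth-order Taylor expansion of the Jacobi map / bilocal operator `W_XL` near the
observer: `B(λ) = λ·Id + (λ³/3!)R(0) + (λ⁴/4!)·2R'(0) + (λ⁵/5!)(3R''(0) + R(0)²) + o(λ⁵)`. -/
theorem wxl_taylor_expansion (n : ℕ)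
    (R : ℝ → Matrix (Fin n) (Fin n) ℝ) (hR : ContDiff ℝ 2 R)
    (B : ℝ → Matrix (Fin n) (Fin n) ℝ) (hB : ContDiff ℝ 2 B)
    (hodeB : ∀ l : ℝ, deriv (deriv B) l = R l * B l)
    (hB0 : B 0 = 0) (hB0' : deriv B 0 = 1) :
    (fun l : ℝ => B l - (l • (1 : Matrix (Fin n) (Fin n) ℝ) + (l ^ 3 / 6) • R 0
        + (l ^ 4 / 24) • (2 • deriv R 0)
        + (l ^ 5 / 120) • ((3 : ℝ) • deriv (deriv R) 0 + R 0 * R 0)))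
      =o[nhds 0] fun l : ℝ => l ^ 5 := by
  -- smoothness bookkeeping
  have hRdiff : Differentiable ℝ R := hR.differentiable two_ne_zero
  have hRd : ContDiff ℝ 1 (deriv R) := by
    have := (contDiff_succ_iff_deriv (n := 1)).mp (by exact_mod_cast hR)
    exact this.2.2
  have hRd_diff : Differentiable ℝ (deriv R) := hRd.differentiable one_ne_zero
  have hRdd_cont : Continuous (deriv (deriv R)) := by
    have := (contDiff_succ_iff_deriv (n := 0)).mp (by exact_mod_cast hRd)
    exact this.2.2.continuous
  have hBdiff : Differentiable ℝ B := hB.differentiable two_ne_zero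
  have hBd : ContDiff ℝ 1 (deriv B) := by
    have := (contDiff_succ_iff_deriv (n := 1)).mp (by exact_mod_cast hB)
    exact this.2.2
  have hBd_diff : Differentiable ℝ (deriv B) := hBd.differentiable one_ne_zero
  -- scalar HasDerivAt helpers
  have hd2 : ∀ l : ℝ, HasDerivAt (fun l : ℝ => l ^ 2 / 2) l l := by
    intro l
    have h := (hasDerivAt_pow 2 l).div_const 2
    norm_num at h
    exact h
  have hd3 : ∀ l : ℝ, HasDerivAt (fun l : ℝ => l ^ 3 / 6) (l ^ 2 / 2) l := by
    intro l
    have h := (hasDerivAt_pow 3 l).div_const 6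
    refine h.congr_deriv ?_
    norm_num
    ring
  have hd4 : ∀ l : ℝ, HasDerivAt (fun l : ℝ => l ^ 4 / 24) (l ^ 3 / 6) l := by
    intro l
    have h := (hasDerivAt_pow 4 l).div_const 24
    refine h.congr_deriv ?_
    norm_num
    ring
  have hd5 : ∀ l : ℝ, HasDerivAt (fun l : ℝ => l ^ 5 / 120) (l ^ 4 / 24) l := by
    intro l
    have h := (hasDerivAt_pow 5 l).div_const 120
    refine h.congr_deriv ?_
    norm_num
    ring
  -- R tendsto facts
  have hRcont : Continuous R := hR.continuous
  -- Step S: second-order expansion of R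
  have hg2 : (fun l => deriv (deriv R) l - (deriv (deriv R) 0)) =o[nhds 0] fun l : ℝ => l ^ 0 := by
    have : Tendsto (fun l => deriv (deriv R) l - (deriv (deriv R) 0)) (nhds 0) (nhds 0) := by
      have := (hRdd_cont.tendsto 0).sub (tendsto_const_nhds (x := (deriv (deriv R) 0)))
      simpa using this
    refine (isLittleO_one_iff _ |>.mpr this).congr (fun _ => rfl) (fun x => by simp)
  have hS1 : (fun l : ℝ => deriv R l - ((deriv R 0) + l • (deriv (deriv R) 0))) =o[nhds 0] fun l : ℝ => l ^ 1 := by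
    have hder : ∀ l : ℝ, HasDerivAt (fun l : ℝ => deriv R l - ((deriv R 0) + l • (deriv (deriv R) 0)))
        (deriv (deriv R) l - (deriv (deriv R) 0)) l := by
      intro l
      have h1 : HasDerivAt (fun l : ℝ => (deriv R 0) + l • (deriv (deriv R) 0)) ((1:ℝ) • (deriv (deriv R) 0)) l :=
        ((hasDerivAt_id l).smul_const (deriv (deriv R) 0)).const_add (deriv R 0)
      have h2 := (hRd_diff l).hasDerivAt.sub h1
      rw [one_smul] at h2
      exact h2
    refine wxl_int_step (fun l => (hder l).differentiableAt) (by simp) ?_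
    have : deriv (fun l : ℝ => deriv R l - ((deriv R 0) + l • (deriv (deriv R) 0))) = fun l => deriv (deriv R) l - (deriv (deriv R) 0) :=
      funext fun l => (hder l).deriv
    rw [this]
    exact hg2
  have hS0 : (fun l : ℝ => R l - ((R 0) + l • (deriv R 0) + (l ^ 2 / 2) • (deriv (deriv R) 0))) =o[nhds 0]
      fun l : ℝ => l ^ 2 := by
    have hder : ∀ l : ℝ, HasDerivAt (fun l : ℝ => R l - ((R 0) + l • (deriv R 0) + (l ^ 2 / 2) • (deriv (deriv R) 0)))
        (deriv R l - ((deriv R 0) + l • (deriv (deriv R) 0))) l := by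
      intro l
      have h1 : HasDerivAt (fun l : ℝ => (R 0) + l • (deriv R 0) + (l ^ 2 / 2) • (deriv (deriv R) 0)) ((1:ℝ) • (deriv R 0) + l • (deriv (deriv R) 0)) l :=
        (((hasDerivAt_id l).smul_const (deriv R 0)).const_add (R 0)).add ((hd2 l).smul_const (deriv (deriv R) 0))
      have h2 := (hRdiff l).hasDerivAt.sub h1
      rw [one_smul] at h2
      exact h2
    refine wxl_int_step (fun l => (hder l).differentiableAt) (by simp) ?_
    have : deriv (fun l : ℝ => R l - ((R 0) + l • (deriv R 0) + (l ^ 2 / 2) • (deriv (deriv R) 0)))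
        = fun l => deriv R l - ((deriv R 0) + l • (deriv (deriv R) 0)) := funext fun l => (hder l).deriv
    rw [this]
    exact hS1
  -- first-order expansion of B from the derivative at 0
  have hRo1 : (fun l => R l - (R 0)) =o[nhds 0] fun _ : ℝ => (1:ℝ) := by
    refine (isLittleO_one_iff _).mpr ?_
    have := (hRcont.tendsto 0).sub (tendsto_const_nhds (x := (R 0)))
    rw [sub_self] at this
    exact this
  have hBlin : (fun l : ℝ => B l - l • (1 : Matrix (Fin n) (Fin n) ℝ)) =o[nhds 0] fun l : ℝ => l ^ 1 := by
    have hd : HasDerivAt B 1 0 := by rw [← hB0']; exact (hBdiff 0).hasDerivAt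
    have h := (hasDerivAt_iff_isLittleO).mp hd
    rw [hB0] at h
    refine h.congr (fun x => by simp) (fun x => by simp)
  -- e2 : second derivative expansion, order 1
  have he2 : (fun l : ℝ => R l * B l - l • (R 0)) =o[nhds 0] fun l : ℝ => l ^ 1 := by
    have part1 : (fun l : ℝ => l • (R l - (R 0))) =o[nhds 0] fun l : ℝ => l ^ 1 := by
      have := (isBigO_refl (fun l : ℝ => l) (nhds 0)).smul_isLittleO hRo1
      exact this.congr (fun x => rfl) (fun x => by simp [pow_one])
    have part2 : (fun l : ℝ => R l * (B l - l • (1 : Matrix (Fin n) (Fin n) ℝ))) =o[nhds 0] fun l : ℝ => l ^ 1 :=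
      wxl_mul_littleO hRcont.continuousAt hBlin
    have := part1.add part2
    refine this.congr (fun x => ?_) (fun x => rfl)
    simp only [mul_sub, smul_sub, mul_smul_comm, mul_one]
    abel
  -- E chain : third-order expansion of B
  have hE1 : (fun l : ℝ => deriv B l - (1 + (l ^ 2 / 2) • (R 0))) =o[nhds 0]
      fun l : ℝ => l ^ 2 := by
    have hder : ∀ l : ℝ, HasDerivAt (fun l : ℝ => deriv B l - (1 + (l ^ 2 / 2) • (R 0)))
        (R l * B l - l • (R 0)) l := by
      intro l
      have h1 : HasDerivAt (fun l : ℝ => (1 : Matrix (Fin n) (Fin n) ℝ) + (l ^ 2 / 2) • (R 0)) (l • (R 0)) l :=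
        ((hd2 l).smul_const (R 0)).const_add 1
      have h2 : HasDerivAt (deriv B) (deriv (deriv B) l) l := (hBd_diff l).hasDerivAt
      rw [hodeB l] at h2
      exact h2.sub h1
    refine wxl_int_step (fun l => (hder l).differentiableAt) (by simp [hB0']) ?_
    have : deriv (fun l : ℝ => deriv B l - (1 + (l ^ 2 / 2) • (R 0)))
        = fun l => R l * B l - l • (R 0) := funext fun l => (hder l).deriv
    rw [this]
    exact he2
  have hE0 : (fun l : ℝ => B l - (l • (1 : Matrix (Fin n) (Fin n) ℝ) + (l ^ 3 / 6) • (R 0))) =o[nhds 0]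
      fun l : ℝ => l ^ 3 := by
    have hder : ∀ l : ℝ, HasDerivAt (fun l : ℝ => B l - (l • (1 : Matrix (Fin n) (Fin n) ℝ) + (l ^ 3 / 6) • (R 0)))
        (deriv B l - (1 + (l ^ 2 / 2) • (R 0))) l := by
      intro l
      have h1 : HasDerivAt (fun l : ℝ => l • (1 : Matrix (Fin n) (Fin n) ℝ) + (l ^ 3 / 6) • (R 0))
          ((1:ℝ) • (1 : Matrix (Fin n) (Fin n) ℝ) + (l ^ 2 / 2) • (R 0)) l :=
        ((hasDerivAt_id l).smul_const (1 : Matrix (Fin n) (Fin n) ℝ)).add ((hd3 l).smul_const (R 0))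
      have h2 := (hBdiff l).hasDerivAt.sub h1
      rw [one_smul] at h2
      exact h2
    refine wxl_int_step (fun l => (hder l).differentiableAt) (by simp [hB0]) ?_
    have : deriv (fun l : ℝ => B l - (l • (1 : Matrix (Fin n) (Fin n) ℝ) + (l ^ 3 / 6) • (R 0)))
        = fun l => deriv B l - (1 + (l ^ 2 / 2) • (R 0)) := funext fun l => (hder l).deriv
    rw [this]
    exact hE1
  -- F2 : second derivative expansion, order 3
  have hF2 : (fun l : ℝ => R l * B l - (l • (R 0) + (l ^ 2 / 2) • (2 • (deriv R 0))
      + (l ^ 3 / 6) • ((3:ℝ) • (deriv (deriv R) 0) + (R 0) * (R 0)))) =o[nhds 0] fun l : ℝ => l ^ 3 := by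
    have ha : (fun l : ℝ => l • (R l - ((R 0) + l • (deriv R 0) + (l ^ 2 / 2) • (deriv (deriv R) 0)))) =o[nhds 0]
        fun l : ℝ => l ^ 3 := by
      have := (isBigO_refl (fun l : ℝ => l) (nhds 0)).smul_isLittleO hS0
      exact this.congr (fun x => rfl) (fun x => by simp [smul_eq_mul]; ring)
    have hb : (fun l : ℝ => (l ^ 3 / 6) • ((R l - (R 0)) * (R 0))) =o[nhds 0]
        fun l : ℝ => l ^ 3 := by
      have h1 : (fun l : ℝ => l ^ 3 / 6) =O[nhds 0] fun l : ℝ => l ^ 3 := by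
        have := (isBigO_refl (fun l : ℝ => l ^ 3) (nhds 0)).const_mul_left (1/6 : ℝ)
        exact this.congr (fun x => by ring) (fun x => rfl)
      have h2 : (fun l : ℝ => (R l - (R 0)) * (R 0)) =o[nhds 0] fun _ : ℝ => (1:ℝ) := by
        refine (isLittleO_one_iff _).mpr ?_
        have hc : Continuous fun l : ℝ => (R l - (R 0)) * (R 0) :=
          (hRcont.sub continuous_const).matrix_mul continuous_const
        have := hc.tendsto 0
        rw [sub_self, zero_mul] at this
        exact this
      have := h1.smul_isLittleO h2
      exact this.congr (fun x => rfl) (fun x => by simp)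
    have hc : (fun l : ℝ => R l * (B l - (l • (1 : Matrix (Fin n) (Fin n) ℝ) + (l ^ 3 / 6) • (R 0)))) =o[nhds 0]
        fun l : ℝ => l ^ 3 := wxl_mul_littleO hRcont.continuousAt hE0
    have hsum := (ha.add hb).add hc
    refine hsum.congr (fun x => ?_) (fun x => rfl)
    simp only [mul_sub, sub_mul, mul_add, mul_smul_comm, smul_sub, smul_add, smul_smul, mul_one, two_smul,
      smul_comm]
    module
  -- F chain : conclude
  have hF1 : (fun l : ℝ => deriv B l - (1 + (l ^ 2 / 2) • (R 0) + (l ^ 3 / 6) • (2 • (deriv R 0))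
      + (l ^ 4 / 24) • ((3:ℝ) • (deriv (deriv R) 0) + (R 0) * (R 0)))) =o[nhds 0] fun l : ℝ => l ^ 4 := by
    have hder : ∀ l : ℝ, HasDerivAt (fun l : ℝ => deriv B l - (1 + (l ^ 2 / 2) • (R 0)
        + (l ^ 3 / 6) • (2 • (deriv R 0)) + (l ^ 4 / 24) • ((3:ℝ) • (deriv (deriv R) 0) + (R 0) * (R 0))))
        (R l * B l - (l • (R 0) + (l ^ 2 / 2) • (2 • (deriv R 0))
          + (l ^ 3 / 6) • ((3:ℝ) • (deriv (deriv R) 0) + (R 0) * (R 0)))) l := by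
      intro l
      have h1 : HasDerivAt (fun l : ℝ => (1 : Matrix (Fin n) (Fin n) ℝ) + (l ^ 2 / 2) • (R 0)
          + (l ^ 3 / 6) • (2 • (deriv R 0)) + (l ^ 4 / 24) • ((3:ℝ) • (deriv (deriv R) 0) + (R 0) * (R 0)))
          (l • (R 0) + (l ^ 2 / 2) • (2 • (deriv R 0)) + (l ^ 3 / 6) • ((3:ℝ) • (deriv (deriv R) 0) + (R 0) * (R 0))) l :=
        ((((hd2 l).smul_const (R 0)).const_add 1).add ((hd3 l).smul_const (2 • (deriv R 0)))).add
          ((hd4 l).smul_const ((3:ℝ) • (deriv (deriv R) 0) + (R 0) * (R 0)))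
      have h2 : HasDerivAt (deriv B) (deriv (deriv B) l) l := (hBd_diff l).hasDerivAt
      rw [hodeB l] at h2
      exact h2.sub h1
    refine wxl_int_step (fun l => (hder l).differentiableAt) (by simp [hB0']) ?_
    have : deriv (fun l : ℝ => deriv B l - (1 + (l ^ 2 / 2) • (R 0) + (l ^ 3 / 6) • (2 • (deriv R 0))
        + (l ^ 4 / 24) • ((3:ℝ) • (deriv (deriv R) 0) + (R 0) * (R 0))))
        = fun l => R l * B l - (l • (R 0) + (l ^ 2 / 2) • (2 • (deriv R 0))
          + (l ^ 3 / 6) • ((3:ℝ) • (deriv (deriv R) 0) + (R 0) * (R 0))) := funext fun l => (hder l).deriv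
    rw [this]
    exact hF2
  have hF0 : (fun l : ℝ => B l - (l • (1 : Matrix (Fin n) (Fin n) ℝ) + (l ^ 3 / 6) • (R 0) + (l ^ 4 / 24) • (2 • (deriv R 0))
      + (l ^ 5 / 120) • ((3:ℝ) • (deriv (deriv R) 0) + (R 0) * (R 0)))) =o[nhds 0] fun l : ℝ => l ^ 5 := by
    have hder : ∀ l : ℝ, HasDerivAt (fun l : ℝ => B l - (l • (1 : Matrix (Fin n) (Fin n) ℝ) + (l ^ 3 / 6) • (R 0)
        + (l ^ 4 / 24) • (2 • (deriv R 0)) + (l ^ 5 / 120) • ((3:ℝ) • (deriv (deriv R) 0) + (R 0) * (R 0))))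
        (deriv B l - (1 + (l ^ 2 / 2) • (R 0) + (l ^ 3 / 6) • (2 • (deriv R 0))
          + (l ^ 4 / 24) • ((3:ℝ) • (deriv (deriv R) 0) + (R 0) * (R 0)))) l := by
      intro l
      have h1 : HasDerivAt (fun l : ℝ => l • (1 : Matrix (Fin n) (Fin n) ℝ) + (l ^ 3 / 6) • (R 0)
          + (l ^ 4 / 24) • (2 • (deriv R 0)) + (l ^ 5 / 120) • ((3:ℝ) • (deriv (deriv R) 0) + (R 0) * (R 0)))
          ((1:ℝ) • (1 : Matrix (Fin n) (Fin n) ℝ) + (l ^ 2 / 2) • (R 0) + (l ^ 3 / 6) • (2 • (deriv R 0))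
            + (l ^ 4 / 24) • ((3:ℝ) • (deriv (deriv R) 0) + (R 0) * (R 0))) l :=
        ((((hasDerivAt_id l).smul_const (1 : Matrix (Fin n) (Fin n) ℝ)).add ((hd3 l).smul_const (R 0))).add
          ((hd4 l).smul_const (2 • (deriv R 0)))).add ((hd5 l).smul_const ((3:ℝ) • (deriv (deriv R) 0) + (R 0) * (R 0)))
      have h2 := (hBdiff l).hasDerivAt.sub h1
      rw [one_smul] at h2
      exact h2
    refine wxl_int_step (fun l => (hder l).differentiableAt) (by simp [hB0]) ?_
    have : deriv (fun l : ℝ => B l - (l • (1 : Matrix (Fin n) (Fin n) ℝ) + (l ^ 3 / 6) • (R 0)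
        + (l ^ 4 / 24) • (2 • (deriv R 0)) + (l ^ 5 / 120) • ((3:ℝ) • (deriv (deriv R) 0) + (R 0) * (R 0))))
        = fun l => deriv B l - (1 + (l ^ 2 / 2) • (R 0) + (l ^ 3 / 6) • (2 • (deriv R 0))
          + (l ^ 4 / 24) • ((3:ℝ) • (deriv (deriv R) 0) + (R 0) * (R 0))) := funext fun l => (hder l).deriv
    rw [this]
    exact hF1
  exact hF0
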